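/- Let G, G₁, G₂ be simple mixed graphs on the same vertex set Fin n (n ≥ 1) such that G = G₁ ⊕ G₂ is a factorization, i.e., E = E₁ + E₂ and A = A₁ + A₂ pointwise. Then (i) max{ξ₁(G₁), ξ₁(G₂)} ≤ ξ₁(G) ≤ ξ₁(G₁) + ξ₁(G₂), and (ii) ξ₂ₙ(G₁) + ξ₂ₙ(G₂) ≤ ξ₂ₙ(G). -/

import Mathlib

set_option linter.unusedSectionVars false

open Matrix Finset Polynomial

variable {V : Type*} [Fintype V] [DecidableEq V]

/-- Undirected adjacency matrix of the mixed graph with edge-multiplicity function `E`: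
`(u,v)`-entry `E u v` for `u ≠ v`, and `(v,v)`-entry `2 * E v v`. -/
def Au (E : V → V → ℕ) : Matrix V V ℝ :=
  Matrix.of fun u v => if u = v then ((2 * E v v : ℕ) : ℝ) else ((E u v : ℕ) : ℝ)

/-- Arc matrix of the mixed graph with arc-multiplicity function `A`. -/
def Bm (A : V → V → ℕ) : Matrix V V ℝ := Matrix.of fun u v => ((A u v : ℕ) : ℝ)

/-- Undirected degree `d v`. -/
def dU (E : V → V → ℕ) (v : V) : ℕ :=
  (∑ u ∈ Finset.univ.filter (fun u => u ≠ v), E v u) + 2 * E v v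

/-- Out-degree `d⁺ v`. -/
def dOut (A : V → V → ℕ) (v : V) : ℕ := ∑ u, A v u

/-- In-degree `d⁻ v`. -/
def dIn (A : V → V → ℕ) (v : V) : ℕ := ∑ u, A u v

/-- Integrated adjacency matrix `𝓘(G) = [[Aᵤ, B], [Bᵀ, Aᵤ]]`. -/
def intAdj (E A : V → V → ℕ) : Matrix (V ⊕ V) (V ⊕ V) ℝ :=
  Matrix.fromBlocks (Au E) (Bm A) (Bm A)ᵀ (Au E)

/-- Integrated degree matrix `𝓘ᴰ(G)`. -/
def intDeg (E A : V → V → ℕ) : Matrix (V ⊕ V) (V ⊕ V) ℝ :=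
  Matrix.diagonal (Sum.elim (fun v => ((dU E v + dOut A v : ℕ) : ℝ))
    (fun v => ((dU E v + dIn A v : ℕ) : ℝ)))

/-- Integrated Laplacian matrix `𝓘ᴸ(G) = 𝓘ᴰ(G) - 𝓘(G)`. -/
def intLap (E A : V → V → ℕ) : Matrix (V ⊕ V) (V ⊕ V) ℝ := intDeg E A - intAdj E A

/-- Integrated signless Laplacian matrix `𝓘Q(G) = 𝓘ᴰ(G) + 𝓘(G)`. -/
def intQ (E A : V → V → ℕ) : Matrix (V ⊕ V) (V ⊕ V) ℝ := intDeg E A + intAdj E A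

/-- A mixed graph is simple: multiplicities at most 1, no loops, no directed loops. -/
def IsSimple (E A : V → V → ℕ) : Prop :=
  (∀ u v, E u v ≤ 1) ∧ (∀ u v, A u v ≤ 1) ∧ (∀ v, E v v = 0) ∧ (∀ v, A v v = 0)

/-- Number of edges (excluding loops): `e(G) = (1/2)·Σ_{u ≠ v} E u v`. -/
noncomputable def numEdges (E : V → V → ℕ) : ℝ :=
  (∑ u, ∑ v ∈ Finset.univ.filter (fun v => v ≠ u), (E u v : ℝ)) / 2

/-- Number of loops: `l(G) = Σ_v E v v`. -/
noncomputable def numLoops (E : V → V → ℕ) : ℝ := ∑ v, (E v v : ℝ)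

/-- Number of arcs (including directed loops): `a(G) = Σ_{u,v} A u v`. -/
noncomputable def numArcs (A : V → V → ℕ) : ℝ := ∑ u, ∑ v, (A u v : ℝ)

lemma intAdj_isHermitian (E A : V → V → ℕ) (hE : ∀ u v, E u v = E v u) :
    (intAdj E A).IsHermitian := by
  have hAu : (Au E)ᵀ = Au E := by
    ext u v
    by_cases h : u = v
    · subst h; rfl
    · simp [Au, Matrix.transpose_apply, h, Ne.symm h, hE u v]
  show (intAdj E A)ᴴ = intAdj E A
  rw [Matrix.conjTranspose_eq_transpose_of_trivial]
  unfold intAdj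
  rw [Matrix.fromBlocks_transpose, hAu, Matrix.transpose_transpose]

lemma intLap_isHermitian (E A : V → V → ℕ) (hE : ∀ u v, E u v = E v u) :
    (intLap E A).IsHermitian :=
  (Matrix.isHermitian_diagonal _).sub (intAdj_isHermitian E A hE)

lemma intQ_isHermitian (E A : V → V → ℕ) (hE : ∀ u v, E u v = E v u) :
    (intQ E A).IsHermitian :=
  (Matrix.isHermitian_diagonal _).add (intAdj_isHermitian E A hE)

/-- The non-increasing rearrangement of a finite tuple of reals. -/
noncomputable def sortDesc {N : ℕ} (f : Fin N → ℝ) : Fin N → ℝ :=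
  fun i => (f ∘ Tuple.sort f) i.rev

/-- The eigenvalues of the integrated Laplacian matrix `𝓘ᴸ(G)`, in non-increasing order:
`nuT E A hE i` is `ν_{i+1}(G)` (0-indexed). -/
noncomputable def nuT {n : ℕ} (E A : Fin n → Fin n → ℕ) (hE : ∀ u v, E u v = E v u) :
    Fin (n + n) → ℝ :=
  sortDesc (fun i => (intLap_isHermitian E A hE).eigenvalues (finSumFinEquiv.symm i))

/-- The eigenvalues of the integrated signless Laplacian matrix `𝓘Q(G)`, in non-increasing
order: `xiT E A hE i` is `ξ_{i+1}(G)` (0-indexed). -/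
noncomputable def xiT {n : ℕ} (E A : Fin n → Fin n → ℕ) (hE : ∀ u v, E u v = E v u) :
    Fin (n + n) → ℝ :=
  sortDesc (fun i => (intQ_isHermitian E A hE).eigenvalues (finSumFinEquiv.symm i))

/-- The eigenvalues of the integrated adjacency matrix `𝓘(G)`, in non-increasing order:
`lamT E A hE i` is `λ_{i+1}(G)` (0-indexed). -/
noncomputable def lamT {n : ℕ} (E A : Fin n → Fin n → ℕ) (hE : ∀ u v, E u v = E v u) :
    Fin (n + n) → ℝ :=
  sortDesc (fun i => (intAdj_isHermitian E A hE).eigenvalues (finSumFinEquiv.symm i))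


section auxhelpers
set_option linter.unusedSectionVars false
variable {m : Type*} [Fintype m] [DecidableEq m]

lemma psd_add {M N : Matrix m m ℝ} (hM : M.PosSemidef) (hN : N.PosSemidef) :
    (M + N).PosSemidef := by
  refine .of_dotProduct_mulVec_nonneg (hM.1.add hN.1) fun x => ?_
  have := hM.dotProduct_mulVec_nonneg x
  have := hN.dotProduct_mulVec_nonneg x
  simp only [add_mulVec, dotProduct_add] at *
  linarith

lemma psd_of_eig_le {M : Matrix m m ℝ} (hM : M.IsHermitian) {t : ℝ}
    (h : ∀ i, hM.eigenvalues i ≤ t) : (t • (1 : Matrix m m ℝ) - M).PosSemidef := by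
  have hspec := hM.spectral_theorem
  set U : Matrix m m ℝ := (hM.eigenvectorUnitary : Matrix m m ℝ) with hU
  have hUU : U * star U = 1 := (Matrix.mem_unitaryGroup_iff).mp hM.eigenvectorUnitary.2
  have key : t • (1 : Matrix m m ℝ) - M
      = U * Matrix.diagonal (fun i => t - hM.eigenvalues i) * star U := by
    have h1 : Matrix.diagonal (fun i => t - hM.eigenvalues i)
        = t • (1 : Matrix m m ℝ) - Matrix.diagonal (RCLike.ofReal ∘ hM.eigenvalues) := by
      ext i j
      by_cases hij : i = j <;> simp [Matrix.diagonal, hij, Matrix.one_apply, RCLike.ofReal]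
    simp only [Unitary.conjStarAlgAut_apply, Unitary.coe_star] at hspec
    rw [h1, Matrix.mul_sub, Matrix.sub_mul, ← hspec]
    congr 1
    rw [Matrix.mul_smul, Matrix.mul_one, Matrix.smul_mul, hUU]
  rw [key]
  exact (Matrix.PosSemidef.diagonal (fun i => by simpa using h i)).mul_mul_conjTranspose_same U

lemma psd_of_le_eig {M : Matrix m m ℝ} (hM : M.IsHermitian) {t : ℝ}
    (h : ∀ i, t ≤ hM.eigenvalues i) : (M - t • (1 : Matrix m m ℝ)).PosSemidef := by
  have hspec := hM.spectral_theorem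
  set U : Matrix m m ℝ := (hM.eigenvectorUnitary : Matrix m m ℝ) with hU
  have hUU : U * star U = 1 := (Matrix.mem_unitaryGroup_iff).mp hM.eigenvectorUnitary.2
  have key : M - t • (1 : Matrix m m ℝ)
      = U * Matrix.diagonal (fun i => hM.eigenvalues i - t) * star U := by
    have h1 : Matrix.diagonal (fun i => hM.eigenvalues i - t)
        = Matrix.diagonal (RCLike.ofReal ∘ hM.eigenvalues) - t • (1 : Matrix m m ℝ) := by
      ext i j
      by_cases hij : i = j <;> simp [Matrix.diagonal, hij, Matrix.one_apply, RCLike.ofReal]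
    simp only [Unitary.conjStarAlgAut_apply, Unitary.coe_star] at hspec
    rw [h1, Matrix.mul_sub, Matrix.sub_mul, ← hspec]
    congr 1
    rw [Matrix.mul_smul, Matrix.mul_one, Matrix.smul_mul, hUU]
  rw [key]
  exact (Matrix.PosSemidef.diagonal (fun i => by simpa using h i)).mul_mul_conjTranspose_same U

lemma eigvec_dot_self {M : Matrix m m ℝ} (hM : M.IsHermitian) (i : m) :
    (⇑(hM.eigenvectorBasis i) : m → ℝ) ⬝ᵥ ⇑(hM.eigenvectorBasis i) = 1 := by
  have := hM.eigenvectorBasis.orthonormal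
  rw [orthonormal_iff_ite] at this
  have h := this i i
  rw [if_pos rfl, PiLp.inner_apply] at h
  simpa [dotProduct, mul_comm, sq] using h

lemma eig_le_of_psd {M : Matrix m m ℝ} (hM : M.IsHermitian) {t : ℝ}
    (h : (t • (1 : Matrix m m ℝ) - M).PosSemidef) (i : m) : hM.eigenvalues i ≤ t := by
  set v : m → ℝ := ⇑(hM.eigenvectorBasis i) with hv
  have h2 := h.dotProduct_mulVec_nonneg v
  rw [star_trivial, Matrix.sub_mulVec, Matrix.smul_mulVec, Matrix.one_mulVec,
    hM.mulVec_eigenvectorBasis, dotProduct_sub, dotProduct_smul, dotProduct_smul,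
    smul_eq_mul, smul_eq_mul, eigvec_dot_self hM i] at h2
  linarith

lemma le_eig_of_psd {M : Matrix m m ℝ} (hM : M.IsHermitian) {t : ℝ}
    (h : (M - t • (1 : Matrix m m ℝ)).PosSemidef) (i : m) : t ≤ hM.eigenvalues i := by
  set v : m → ℝ := ⇑(hM.eigenvectorBasis i) with hv
  have h2 := h.dotProduct_mulVec_nonneg v
  rw [star_trivial, Matrix.sub_mulVec, Matrix.smul_mulVec, Matrix.one_mulVec,
    hM.mulVec_eigenvectorBasis, dotProduct_sub, dotProduct_smul, dotProduct_smul,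
    smul_eq_mul, smul_eq_mul, eigvec_dot_self hM i] at h2
  linarith

lemma psd_deg_add {M : Matrix m m ℝ} (hsym : Mᵀ = M) (hnn : ∀ i j, 0 ≤ M i j) :
    (Matrix.diagonal (fun i => ∑ j, M i j) + M).PosSemidef := by
  have hMs : ∀ i j, M j i = M i j := fun i j => congrFun (congrFun hsym i) j
  have hHerm : M.IsHermitian := by
    rw [Matrix.IsHermitian, Matrix.conjTranspose_eq_transpose_of_trivial, hsym]
  refine .of_dotProduct_mulVec_nonneg ((Matrix.isHermitian_diagonal _).add hHerm) fun x => ?_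
  rw [star_trivial]
  have lhs_eq : x ⬝ᵥ ((Matrix.diagonal (fun i => ∑ j, M i j) + M) *ᵥ x)
      = ∑ i, ∑ j, (M i j * (x i)^2 + M i j * (x i * x j)) := by
    simp only [Matrix.add_mulVec, Matrix.mulVec_diagonal, Pi.add_apply, dotProduct]
    simp only [Matrix.mulVec, dotProduct]
    refine Finset.sum_congr rfl fun i _ => ?_
    rw [mul_add, Finset.sum_mul, Finset.mul_sum, Finset.mul_sum, ← Finset.sum_add_distrib]
    exact Finset.sum_congr rfl fun j _ => by ring
  have hswap : ∑ i, ∑ j, M i j * (x j)^2 = ∑ i, ∑ j, M i j * (x i)^2 := by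
    rw [Finset.sum_comm]
    exact Finset.sum_congr rfl fun i _ => Finset.sum_congr rfl fun j _ => by rw [hMs]
  have rhs_eq : ∑ i, ∑ j, M i j * (x i + x j)^2
      = 2 * ∑ i, ∑ j, (M i j * (x i)^2 + M i j * (x i * x j)) := by
    have expand : ∀ i j : m, M i j * (x i + x j)^2
        = (M i j * (x i)^2 + M i j * (x i * x j)) + (M i j * (x j)^2 + M i j * (x i * x j)) := by
      intros; ring
    calc ∑ i, ∑ j, M i j * (x i + x j)^2
        = (∑ i, ∑ j, (M i j * (x i)^2 + M i j * (x i * x j)))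
          + ∑ i, ∑ j, (M i j * (x j)^2 + M i j * (x i * x j)) := by
          rw [← Finset.sum_add_distrib]
          refine Finset.sum_congr rfl fun i _ => ?_
          rw [← Finset.sum_add_distrib]
          exact Finset.sum_congr rfl fun j _ => expand i j
      _ = 2 * ∑ i, ∑ j, (M i j * (x i)^2 + M i j * (x i * x j)) := by
          simp only [Finset.sum_add_distrib, hswap]; ring
  have hnonneg : 0 ≤ ∑ i, ∑ j, M i j * (x i + x j)^2 :=
    Finset.sum_nonneg fun i _ => Finset.sum_nonneg fun j _ =>
      mul_nonneg (hnn i j) (sq_nonneg _)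
  rw [lhs_eq]
  nlinarith [rhs_eq, hnonneg]
end auxhelpers

section auxgraph

lemma sortDesc_zero_ub {N : ℕ} (hN : 0 < N) (f : Fin N → ℝ) (j : Fin N) :
    f j ≤ sortDesc f ⟨0, hN⟩ := by
  have hmono := Tuple.monotone_sort f
  have hj : f j = (f ∘ Tuple.sort f) ((Tuple.sort f)⁻¹ j) := by simp
  rw [hj, sortDesc]
  apply hmono
  rw [Fin.le_def, Fin.val_rev]
  have := ((Tuple.sort f)⁻¹ j).isLt
  simp only
  omega

lemma sortDesc_zero_mem {N : ℕ} (hN : 0 < N) (f : Fin N → ℝ) :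
    ∃ j, sortDesc f ⟨0, hN⟩ = f j :=
  ⟨Tuple.sort f (Fin.rev ⟨0, hN⟩), rfl⟩

lemma sortDesc_last_lb {N : ℕ} (hN : 0 < N) (f : Fin N → ℝ) (j : Fin N) :
    sortDesc f ⟨N - 1, by omega⟩ ≤ f j := by
  have hmono := Tuple.monotone_sort f
  have hj : f j = (f ∘ Tuple.sort f) ((Tuple.sort f)⁻¹ j) := by simp
  rw [hj, sortDesc]
  apply hmono
  rw [Fin.le_def, Fin.val_rev]
  simp only
  omega

lemma sortDesc_last_mem {N : ℕ} (hN : 0 < N) (f : Fin N → ℝ) :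
    ∃ j, sortDesc f ⟨N - 1, by omega⟩ = f j :=
  ⟨Tuple.sort f (Fin.rev ⟨N - 1, by omega⟩), rfl⟩

variable {V : Type*} [Fintype V] [DecidableEq V]

lemma Au_add (E E₁ E₂ : V → V → ℕ) (h : ∀ u v, E u v = E₁ u v + E₂ u v) :
    Au E = Au E₁ + Au E₂ := by
  ext u v
  by_cases huv : u = v <;> simp [Au, huv, h] <;> push_cast <;> ring

lemma Bm_add (A A₁ A₂ : V → V → ℕ) (h : ∀ u v, A u v = A₁ u v + A₂ u v) :
    Bm A = Bm A₁ + Bm A₂ := by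
  ext u v
  simp [Bm, h]

lemma intAdj_add (E A E₁ A₁ E₂ A₂ : V → V → ℕ)
    (hEs : ∀ u v, E u v = E₁ u v + E₂ u v) (hAs : ∀ u v, A u v = A₁ u v + A₂ u v) :
    intAdj E A = intAdj E₁ A₁ + intAdj E₂ A₂ := by
  unfold intAdj
  rw [Au_add E E₁ E₂ hEs, Bm_add A A₁ A₂ hAs, Matrix.transpose_add,
    Matrix.fromBlocks_add]

lemma dU_add (E E₁ E₂ : V → V → ℕ) (h : ∀ u v, E u v = E₁ u v + E₂ u v) (v : V) :
    dU E v = dU E₁ v + dU E₂ v := by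
  unfold dU
  simp only [h]
  rw [Finset.sum_add_distrib]
  ring

lemma dOut_add (A A₁ A₂ : V → V → ℕ) (h : ∀ u v, A u v = A₁ u v + A₂ u v) (v : V) :
    dOut A v = dOut A₁ v + dOut A₂ v := by
  unfold dOut
  simp only [h]
  rw [Finset.sum_add_distrib]

lemma dIn_add (A A₁ A₂ : V → V → ℕ) (h : ∀ u v, A u v = A₁ u v + A₂ u v) (v : V) :
    dIn A v = dIn A₁ v + dIn A₂ v := by
  unfold dIn
  simp only [h]
  rw [Finset.sum_add_distrib]

lemma intDeg_add (E A E₁ A₁ E₂ A₂ : V → V → ℕ)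
    (hEs : ∀ u v, E u v = E₁ u v + E₂ u v) (hAs : ∀ u v, A u v = A₁ u v + A₂ u v) :
    intDeg E A = intDeg E₁ A₁ + intDeg E₂ A₂ := by
  have hfun : (Sum.elim (fun v => ((dU E v + dOut A v : ℕ) : ℝ))
        (fun v => ((dU E v + dIn A v : ℕ) : ℝ)))
      = Sum.elim (fun v => ((dU E₁ v + dOut A₁ v : ℕ) : ℝ))
          (fun v => ((dU E₁ v + dIn A₁ v : ℕ) : ℝ))
        + Sum.elim (fun v => ((dU E₂ v + dOut A₂ v : ℕ) : ℝ))
          (fun v => ((dU E₂ v + dIn A₂ v : ℕ) : ℝ)) := by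
    funext i
    cases i with
    | inl v =>
        simp only [Pi.add_apply, Sum.elim_inl]
        rw [dU_add E E₁ E₂ hEs v, dOut_add A A₁ A₂ hAs v]
        push_cast
        ring
    | inr v =>
        simp only [Pi.add_apply, Sum.elim_inr]
        rw [dU_add E E₁ E₂ hEs v, dIn_add A A₁ A₂ hAs v]
        push_cast
        ring
  unfold intDeg
  rw [hfun, Matrix.diagonal_add]
  rfl

lemma intQ_add (E A E₁ A₁ E₂ A₂ : V → V → ℕ)
    (hEs : ∀ u v, E u v = E₁ u v + E₂ u v) (hAs : ∀ u v, A u v = A₁ u v + A₂ u v) :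
    intQ E A = intQ E₁ A₁ + intQ E₂ A₂ := by
  unfold intQ
  rw [intDeg_add E A E₁ A₁ E₂ A₂ hEs hAs, intAdj_add E A E₁ A₁ E₂ A₂ hEs hAs]
  abel

lemma intAdj_nonneg (E A : V → V → ℕ) (i j : V ⊕ V) : 0 ≤ intAdj E A i j := by
  cases i <;> cases j <;> simp [intAdj, Au, Bm] <;> split <;> positivity

lemma intDeg_eq_rowsum (E A : V → V → ℕ) :
    intDeg E A = Matrix.diagonal (fun i => ∑ j, intAdj E A i j) := by
  have hAu : ∀ v : V, ∑ u, Au E v u = ((dU E v : ℕ) : ℝ) := by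
    intro v
    rw [← Finset.add_sum_erase _ _ (Finset.mem_univ v)]
    have h1 : Au E v v = ((2 * E v v : ℕ) : ℝ) := by simp [Au]
    have h2 : ∀ u ∈ Finset.univ.erase v, Au E v u = ((E v u : ℕ) : ℝ) := by
      intro u hu
      have : v ≠ u := fun h => (Finset.mem_erase.mp hu).1 h.symm
      simp [Au, this]
    rw [h1, Finset.sum_congr rfl h2, ← Finset.filter_ne']
    unfold dU
    push_cast
    ring
  have hfun : (Sum.elim (fun v => ((dU E v + dOut A v : ℕ) : ℝ))
        (fun v => ((dU E v + dIn A v : ℕ) : ℝ)))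
      = fun i => ∑ j, intAdj E A i j := by
    funext i
    cases i with
    | inl v =>
        simp only [Sum.elim_inl]
        rw [Fintype.sum_sum_type]
        simp only [intAdj, Matrix.fromBlocks_apply₁₁, Matrix.fromBlocks_apply₁₂]
        rw [hAu v]
        unfold dOut Bm
        push_cast
        simp
    | inr v =>
        simp only [Sum.elim_inr]
        rw [Fintype.sum_sum_type]
        simp only [intAdj, Matrix.fromBlocks_apply₂₁, Matrix.fromBlocks_apply₂₂]
        rw [hAu v]
        unfold dIn Bm
        push_cast
        simp [add_comm]
  unfold intDeg
  rw [hfun]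

lemma intQ_psd (E A : V → V → ℕ) (hE : ∀ u v, E u v = E v u) :
    (intQ E A).PosSemidef := by
  rw [intQ, intDeg_eq_rowsum]
  have hherm := intAdj_isHermitian E A hE
  rw [Matrix.IsHermitian, Matrix.conjTranspose_eq_transpose_of_trivial] at hherm
  exact psd_deg_add hherm (intAdj_nonneg E A)

lemma nn_pos {n : ℕ} (hn : 0 < n) : 0 < n + n := by omega

lemma nn_last {n : ℕ} (hn : 0 < n) : n + n - 1 < n + n := by omega

lemma xiT_top_ub {n : ℕ} (hn : 0 < n) (E A : Fin n → Fin n → ℕ)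
    (hE : ∀ u v, E u v = E v u) (s : Fin n ⊕ Fin n) :
    (intQ_isHermitian E A hE).eigenvalues s ≤ xiT E A hE ⟨0, nn_pos hn⟩ := by
  have := sortDesc_zero_ub (by omega : 0 < n + n)
    (fun i => (intQ_isHermitian E A hE).eigenvalues (finSumFinEquiv.symm i))
    (finSumFinEquiv s)
  simpa [xiT] using this

lemma xiT_top_mem {n : ℕ} (hn : 0 < n) (E A : Fin n → Fin n → ℕ)
    (hE : ∀ u v, E u v = E v u) :
    ∃ s, xiT E A hE ⟨0, nn_pos hn⟩ = (intQ_isHermitian E A hE).eigenvalues s := by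
  obtain ⟨j, hj⟩ := sortDesc_zero_mem (by omega : 0 < n + n)
    (fun i => (intQ_isHermitian E A hE).eigenvalues (finSumFinEquiv.symm i))
  exact ⟨finSumFinEquiv.symm j, hj⟩

lemma xiT_bot_lb {n : ℕ} (hn : 0 < n) (E A : Fin n → Fin n → ℕ)
    (hE : ∀ u v, E u v = E v u) (s : Fin n ⊕ Fin n) :
    xiT E A hE ⟨n + n - 1, nn_last hn⟩ ≤ (intQ_isHermitian E A hE).eigenvalues s := by
  have := sortDesc_last_lb (by omega : 0 < n + n)
    (fun i => (intQ_isHermitian E A hE).eigenvalues (finSumFinEquiv.symm i))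
    (finSumFinEquiv s)
  simpa [xiT] using this

lemma xiT_bot_mem {n : ℕ} (hn : 0 < n) (E A : Fin n → Fin n → ℕ)
    (hE : ∀ u v, E u v = E v u) :
    ∃ s, xiT E A hE ⟨n + n - 1, nn_last hn⟩ = (intQ_isHermitian E A hE).eigenvalues s := by
  obtain ⟨j, hj⟩ := sortDesc_last_mem (by omega : 0 < n + n)
    (fun i => (intQ_isHermitian E A hE).eigenvalues (finSumFinEquiv.symm i))
  exact ⟨finSumFinEquiv.symm j, hj⟩

end auxgraph

/-- if `G = G₁ ⊕ G₂` is a factorization of a simple mixed graph then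
(i) `max{ξ₁(G₁), ξ₁(G₂)} ≤ ξ₁(G) ≤ ξ₁(G₁) + ξ₁(G₂)` and
(ii) `ξ₂ₙ(G₁) + ξ₂ₙ(G₂) ≤ ξ₂ₙ(G)`. -/
theorem stmt17 (n : ℕ) (hn : 0 < n) (E A E₁ A₁ E₂ A₂ : Fin n → Fin n → ℕ)
    (hE : ∀ u v, E u v = E v u) (hE₁ : ∀ u v, E₁ u v = E₁ v u) (hE₂ : ∀ u v, E₂ u v = E₂ v u)
    (hS : IsSimple E A) (hS₁ : IsSimple E₁ A₁) (hS₂ : IsSimple E₂ A₂)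
    (hEsum : ∀ u v, E u v = E₁ u v + E₂ u v) (hAsum : ∀ u v, A u v = A₁ u v + A₂ u v) :
    (max (xiT E₁ A₁ hE₁ ⟨0, by omega⟩) (xiT E₂ A₂ hE₂ ⟨0, by omega⟩) ≤
        xiT E A hE ⟨0, by omega⟩) ∧
    (xiT E A hE ⟨0, by omega⟩ ≤ xiT E₁ A₁ hE₁ ⟨0, by omega⟩ + xiT E₂ A₂ hE₂ ⟨0, by omega⟩) ∧
    (xiT E₁ A₁ hE₁ ⟨n + n - 1, by omega⟩ + xiT E₂ A₂ hE₂ ⟨n + n - 1, by omega⟩ ≤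
        xiT E A hE ⟨n + n - 1, by omega⟩) := by
  have hQ := intQ_add E A E₁ A₁ E₂ A₂ hEsum hAsum
  have hP₁ := intQ_psd E₁ A₁ hE₁
  have hP₂ := intQ_psd E₂ A₂ hE₂
  set ξ : ℝ := xiT E A hE ⟨0, by omega⟩ with hξ
  set ξ₁ : ℝ := xiT E₁ A₁ hE₁ ⟨0, by omega⟩ with hξ₁
  set ξ₂ : ℝ := xiT E₂ A₂ hE₂ ⟨0, by omega⟩ with hξ₂
  have hub := xiT_top_ub hn E A hE
  have hub₁ := xiT_top_ub hn E₁ A₁ hE₁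
  have hub₂ := xiT_top_ub hn E₂ A₂ hE₂
  have hlb₁ := xiT_bot_lb hn E₁ A₁ hE₁
  have hlb₂ := xiT_bot_lb hn E₂ A₂ hE₂
  refine ⟨max_le ?_ ?_, ?_, ?_⟩
  · obtain ⟨s, hs⟩ := xiT_top_mem hn E₁ A₁ hE₁
    rw [← hξ₁, ← hξ] at *
    rw [hs]
    apply eig_le_of_psd (intQ_isHermitian E₁ A₁ hE₁)
    have key : ξ • (1 : Matrix (Fin n ⊕ Fin n) (Fin n ⊕ Fin n) ℝ) - intQ E₁ A₁
        = (ξ • (1 : Matrix (Fin n ⊕ Fin n) (Fin n ⊕ Fin n) ℝ) - intQ E A) + intQ E₂ A₂ := by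
      rw [hQ]; abel
    rw [key]
    exact psd_add (psd_of_eig_le (intQ_isHermitian E A hE) hub) hP₂
  · obtain ⟨s, hs⟩ := xiT_top_mem hn E₂ A₂ hE₂
    rw [← hξ₂, ← hξ] at *
    rw [hs]
    apply eig_le_of_psd (intQ_isHermitian E₂ A₂ hE₂)
    have key : ξ • (1 : Matrix (Fin n ⊕ Fin n) (Fin n ⊕ Fin n) ℝ) - intQ E₂ A₂
        = (ξ • (1 : Matrix (Fin n ⊕ Fin n) (Fin n ⊕ Fin n) ℝ) - intQ E A) + intQ E₁ A₁ := by
      rw [hQ]; abel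
    rw [key]
    exact psd_add (psd_of_eig_le (intQ_isHermitian E A hE) hub) hP₁
  · obtain ⟨s, hs⟩ := xiT_top_mem hn E A hE
    rw [← hξ, ← hξ₁, ← hξ₂] at *
    rw [hs]
    apply eig_le_of_psd (intQ_isHermitian E A hE)
    have key : (ξ₁ + ξ₂) • (1 : Matrix (Fin n ⊕ Fin n) (Fin n ⊕ Fin n) ℝ) - intQ E A
        = (ξ₁ • (1 : Matrix (Fin n ⊕ Fin n) (Fin n ⊕ Fin n) ℝ) - intQ E₁ A₁)
          + (ξ₂ • (1 : Matrix (Fin n ⊕ Fin n) (Fin n ⊕ Fin n) ℝ) - intQ E₂ A₂) := by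
      rw [hQ, add_smul]; abel
    rw [key]
    exact psd_add (psd_of_eig_le (intQ_isHermitian E₁ A₁ hE₁) hub₁)
      (psd_of_eig_le (intQ_isHermitian E₂ A₂ hE₂) hub₂)
  · obtain ⟨s, hs⟩ := xiT_bot_mem hn E A hE
    set μ₁ : ℝ := xiT E₁ A₁ hE₁ ⟨n + n - 1, by omega⟩ with hμ₁
    set μ₂ : ℝ := xiT E₂ A₂ hE₂ ⟨n + n - 1, by omega⟩ with hμ₂
    rw [hs]
    apply le_eig_of_psd (intQ_isHermitian E A hE)
    have key : intQ E A - (μ₁ + μ₂) • (1 : Matrix (Fin n ⊕ Fin n) (Fin n ⊕ Fin n) ℝ)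
        = (intQ E₁ A₁ - μ₁ • (1 : Matrix (Fin n ⊕ Fin n) (Fin n ⊕ Fin n) ℝ))
          + (intQ E₂ A₂ - μ₂ • (1 : Matrix (Fin n ⊕ Fin n) (Fin n ⊕ Fin n) ℝ)) := by
      rw [hQ, add_smul]; abel
    rw [key]
    exact psd_add (psd_of_le_eig (intQ_isHermitian E₁ A₁ hE₁) hlb₁)
      (psd_of_le_eig (intQ_isHermitian E₂ A₂ hE₂) hlb₂)
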